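/- arXiv:1710.01780 — 6 statements merged into one kernel-verified Lean document; each statement's English description precedes it below -/
import Mathlib

section
/- Let m ≥ 2, β > 1 satisfy β^m = β^{m-1} + ⋯ + β + 1, and ρ = 1/β. Let n ≤ m and ε, ε' ∈ {−1,+1}^n with ε < ε' in lexicographic order (with −1 < +1). Then Σ_{j=1}^n ε_j ρ^j < Σ_{j=1}^n ε'_j ρ^j. In particular, the map ε ↦ Σ_{j=1}^n ε_j ρ^j is injective on {−1,+1}^n when n ≤ m. -/
lemma aux_key (m n : ℕ) (hn : n ≤ m) (ρ : ℝ) (hρ0 : 0 < ρ)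
    (hone : ∑ i ∈ Finset.range m, ρ ^ (i + 1) = 1)
    (ε ε' : Fin n → ℝ) (h1 : ∀ j, ε j = 1 ∨ ε j = -1) (h2 : ∀ j, ε' j = 1 ∨ ε' j = -1)
    (k : Fin n) (hk : ∀ j, j < k → ε j = ε' j) (hkk : ε k < ε' k) :
    ∑ j, ε j * ρ ^ ((j : ℕ) + 1) < ∑ j, ε' j * ρ ^ ((j : ℕ) + 1) := by
  have hεk : ε k = -1 := by
    rcases h1 k with h | h
    · exfalso; rcases h2 k with h' | h' <;> rw [h, h'] at hkk <;> linarith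
    · exact h
  have hε'k : ε' k = 1 := by
    rcases h2 k with h' | h'
    · exact h'
    · exfalso; rcases h1 k with h | h <;> rw [h, h'] at hkk <;> linarith
  have hKn : (k : ℕ) < n := k.isLt
  set F : ℕ → ℝ := fun j => if j < (k : ℕ) then 0 else if j = (k : ℕ) then 2 * ρ ^ ((k : ℕ) + 1)
      else -2 * ρ ^ (j + 1) with hF
  have hd : ∀ j : Fin n, F (j : ℕ) ≤ (ε' j - ε j) * ρ ^ ((j : ℕ) + 1) := by
    intro j
    rcases lt_trichotomy ((j : ℕ)) ((k : ℕ)) with h | h | h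
    · have hj : j < k := h
      simp only [hF, if_pos h]
      rw [hk j hj]; simp
    · have hj : j = k := Fin.ext h
      subst hj
      simp only [hF, if_neg (lt_irrefl _), if_pos rfl, hεk, hε'k]
      norm_num
    · simp only [hF, if_neg (not_lt.2 h.le), if_neg (Nat.ne_of_gt h)]
      have hb : -2 ≤ ε' j - ε j := by
        rcases h1 j with ha | ha <;> rcases h2 j with hb | hb <;> rw [ha, hb] <;> norm_num
      have := pow_pos hρ0 ((j : ℕ) + 1)
      nlinarith
  have hFK : F (k : ℕ) = 2 * ρ ^ ((k : ℕ) + 1) := by simp [hF]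
  have hsplit : ∑ i ∈ Finset.range n, F i
      = 2 * ρ ^ ((k : ℕ) + 1) + ∑ i ∈ Finset.Ico ((k : ℕ) + 1) n, F i := by
    rw [Finset.range_eq_Ico, ← Finset.sum_Ico_consecutive _ (Nat.zero_le ((k:ℕ)+1)) hKn,
      ← Finset.range_eq_Ico, Finset.sum_range_succ]
    have h0 : ∑ i ∈ Finset.range (k : ℕ), F i = 0 := by
      apply Finset.sum_eq_zero
      intro i hi
      simp only [hF, if_pos (Finset.mem_range.mp hi)]
    rw [h0, hFK]
    ring
  have htail : ∑ i ∈ Finset.Ico ((k : ℕ) + 1) n, F i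
      = -2 * ∑ i ∈ Finset.Ico ((k : ℕ) + 1) n, ρ ^ (i + 1) := by
    rw [Finset.mul_sum]
    apply Finset.sum_congr rfl
    intro i hi
    obtain ⟨hi1, hi2⟩ := Finset.mem_Ico.mp hi
    have hKi : (k : ℕ) < i := Nat.lt_of_succ_le hi1
    simp only [hF, if_neg (not_lt.2 hKi.le), if_neg (Nat.ne_of_gt hKi)]
  have hgeo : ∑ i ∈ Finset.Ico ((k : ℕ) + 1) n, ρ ^ (i + 1) < ρ ^ ((k : ℕ) + 1) := by
    have hshift : ∑ i ∈ Finset.Ico ((k : ℕ) + 1) n, ρ ^ (i + 1)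
        = ρ ^ ((k : ℕ) + 1) * ∑ t ∈ Finset.range (n - ((k : ℕ) + 1)), ρ ^ (t + 1) := by
      rw [Finset.sum_Ico_eq_sum_range, Finset.mul_sum]
      apply Finset.sum_congr rfl
      intro t _
      rw [← pow_add]
      ring_nf
    rw [hshift]
    have hL : n - ((k : ℕ) + 1) < m :=
      lt_of_lt_of_le (Nat.sub_lt (lt_of_le_of_lt (Nat.zero_le _) hKn) (Nat.succ_pos _)) hn
    have hlt : ∑ t ∈ Finset.range (n - ((k : ℕ) + 1)), ρ ^ (t + 1) < 1 := by
      rw [← hone]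
      refine Finset.sum_lt_sum_of_subset (f := fun t => ρ ^ (t + 1))
        (Finset.range_subset_range.mpr (le_of_lt hL)) (Finset.mem_range.mpr hL) (by simp)
        (pow_pos hρ0 _) fun j _ _ => le_of_lt (pow_pos hρ0 _)
    calc ρ ^ ((k:ℕ)+1) * ∑ t ∈ Finset.range (n - ((k:ℕ) + 1)), ρ ^ (t + 1)
        < ρ ^ ((k:ℕ)+1) * 1 := mul_lt_mul_of_pos_left hlt (pow_pos hρ0 _)
      _ = ρ ^ ((k:ℕ)+1) := mul_one _
  have hFpos : 0 < ∑ i ∈ Finset.range n, F i := by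
    rw [hsplit, htail]; nlinarith
  have hFsum : ∑ j : Fin n, F (j : ℕ) = ∑ i ∈ Finset.range n, F i :=
    Fin.sum_univ_eq_sum_range F n
  have hS : ∑ i ∈ Finset.range n, F i ≤ ∑ j : Fin n, (ε' j - ε j) * ρ ^ ((j : ℕ) + 1) := by
    rw [← hFsum]
    exact Finset.sum_le_sum fun j _ => hd j
  have hpos : 0 < ∑ j : Fin n, (ε' j * ρ ^ ((j : ℕ) + 1) - ε j * ρ ^ ((j : ℕ) + 1)) := by
    refine lt_of_lt_of_le hFpos (le_trans hS (le_of_eq ?_))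
    apply Finset.sum_congr rfl
    intro j _; ring
  rw [Finset.sum_sub_distrib] at hpos
  linarith

theorem stmt_4 (m : ℕ) (hm : 2 ≤ m) (β : ℝ) (hβ1 : 1 < β)
    (hβ : β ^ m = ∑ j ∈ Finset.range m, β ^ j) (ρ : ℝ) (hρ : ρ = 1 / β)
    (n : ℕ) (hn : n ≤ m) :
    (∀ ε ε' : Fin n → ℝ, (∀ j, ε j = 1 ∨ ε j = -1) → (∀ j, ε' j = 1 ∨ ε' j = -1) →
      (∃ k : Fin n, (∀ j, j < k → ε j = ε' j) ∧ ε k < ε' k) →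
      ∑ j, ε j * ρ ^ ((j : ℕ) + 1) < ∑ j, ε' j * ρ ^ ((j : ℕ) + 1)) ∧
    (∀ ε ε' : Fin n → ℝ, (∀ j, ε j = 1 ∨ ε j = -1) → (∀ j, ε' j = 1 ∨ ε' j = -1) →
      ∑ j, ε j * ρ ^ ((j : ℕ) + 1) = ∑ j, ε' j * ρ ^ ((j : ℕ) + 1) → ε = ε') := by
  have hβ0 : (0:ℝ) < β := lt_trans one_pos hβ1
  have hβne : β ≠ 0 := ne_of_gt hβ0
  have hρ0 : 0 < ρ := by rw [hρ]; positivity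
  have hρβ : ρ * β = 1 := by rw [hρ]; field_simp
  have hone : ∑ i ∈ Finset.range m, ρ ^ (i + 1) = 1 := by
    have hmul : (∑ i ∈ Finset.range m, ρ ^ (i + 1)) * β ^ m = β ^ m := by
      rw [Finset.sum_mul]
      have : ∀ i ∈ Finset.range m, ρ ^ (i + 1) * β ^ m = β ^ (m - 1 - i) := by
        intro i hi
        have him : i + 1 ≤ m := Nat.succ_le_of_lt (Finset.mem_range.mp hi)
        have hps : β ^ (m - (i + 1)) * β ^ (i + 1) = β ^ m := pow_sub_mul_pow β him
        have hone' : ρ ^ (i + 1) * β ^ (i + 1) = 1 := by rw [← mul_pow, hρβ, one_pow]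
        have : ρ ^ (i + 1) * β ^ m = β ^ (m - (i + 1)) := by
          rw [← hps]; rw [show ρ ^ (i+1) * (β ^ (m - (i+1)) * β ^ (i+1))
            = β ^ (m - (i+1)) * (ρ ^ (i+1) * β ^ (i+1)) by ring, hone', mul_one]
        rw [this, Nat.sub_sub, Nat.add_comm 1 i]
      rw [Finset.sum_congr rfl this, Finset.sum_range_reflect (fun j => β ^ j) m, ← hβ]
    have hβm : (β : ℝ) ^ m ≠ 0 := pow_ne_zero _ hβne
    exact mul_right_cancel₀ hβm (hmul.trans (one_mul (β ^ m)).symm)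
  constructor
  · rintro ε ε' h1 h2 ⟨k, hk, hkk⟩
    exact aux_key m n hn ρ hρ0 hone ε ε' h1 h2 k hk hkk
  · intro ε ε' h1 h2 heq
    by_contra hne
    have hs : (Finset.univ.filter (fun j => ε j ≠ ε' j)).Nonempty := by
      rw [Finset.filter_nonempty_iff]
      by_contra h
      push_neg at h
      exact hne (funext fun j => h j (Finset.mem_univ j))
    set k := (Finset.univ.filter (fun j => ε j ≠ ε' j)).min' hs with hkdef
    have hkmem : ε k ≠ ε' k := by
      have := (Finset.univ.filter (fun j => ε j ≠ ε' j)).min'_mem hs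
      simpa using this
    have hlt : ∀ j, j < k → ε j = ε' j := by
      intro j hj
      by_contra hcon
      have : k ≤ j := Finset.min'_le _ _ (by simpa using hcon)
      exact absurd hj (not_lt.2 this)
    rcases lt_or_gt_of_ne hkmem with h | h
    · exact absurd heq (ne_of_lt (aux_key m n hn ρ hρ0 hone ε ε' h1 h2 k hlt h))
    · exact absurd heq.symm
        (ne_of_lt (aux_key m n hn ρ hρ0 hone ε' ε h2 h1 k (fun j hj => (hlt j hj).symm) h))
end

section
/- Let m ≥ 2, β > 1 satisfy β^m = β^{m-1} + ⋯ + β + 1, and ρ = 1/β. Let n = m+1 and ε, ε' ∈ {−1,+1}^{m+1} with ε < ε' lexicographically. Then Σ_{j=1}^{m+1} ε_j ρ^j ≤ Σ_{j=1}^{m+1} ε'_j ρ^j, with equality if and only if ε = (−1,+1,…,+1) and ε' = (+1,−1,…,−1). -/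
open Finset

theorem stmt_5 (m : ℕ) (hm : 2 ≤ m) (β : ℝ) (hβ1 : 1 < β)
    (hβ : β ^ m = ∑ j ∈ Finset.range m, β ^ j) (ρ : ℝ) (hρ : ρ = 1 / β)
    (ε ε' : Fin (m + 1) → ℝ)
    (hε : ∀ j, ε j = 1 ∨ ε j = -1) (hε' : ∀ j, ε' j = 1 ∨ ε' j = -1)
    (hlex : ∃ k : Fin (m + 1), (∀ j, j < k → ε j = ε' j) ∧ ε k < ε' k) :
    ∑ j, ε j * ρ ^ ((j : ℕ) + 1) ≤ ∑ j, ε' j * ρ ^ ((j : ℕ) + 1) ∧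
    ((∑ j, ε j * ρ ^ ((j : ℕ) + 1)) = ∑ j, ε' j * ρ ^ ((j : ℕ) + 1) ↔
      (ε = fun j : Fin (m + 1) => if (j : ℕ) = 0 then (-1 : ℝ) else 1) ∧
      (ε' = fun j : Fin (m + 1) => if (j : ℕ) = 0 then (1 : ℝ) else -1)) := by
  classical
  obtain ⟨k, hk1, hk2⟩ := hlex
  have hβ0 : (0:ℝ) < β := lt_trans one_pos hβ1
  have hρ0 : 0 < ρ := by rw [hρ]; positivity
  have hρβ : ρ * β = 1 := by rw [hρ]; field_simp
  -- key identity : ∑_{i<m} ρ^{i+1} = 1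
  have hkey : ∑ i ∈ range m, ρ ^ (i+1) = 1 := by
    have hbm : (0:ℝ) < β ^ m := pow_pos hβ0 m
    have h2 : ∀ i ∈ range m, ρ^(i+1) * β^m = β^(m-1-i) := by
      intro i hi
      rw [mem_range] at hi
      have e1 : β^m = β^(i+1) * β^(m-1-i) := by rw [← pow_add]; congr 1; omega
      rw [e1, ← mul_assoc, ← mul_pow, hρβ, one_pow, one_mul]
    have h1 : (∑ i ∈ range m, ρ ^ (i+1)) * β ^ m = β ^ m := by
      rw [Finset.sum_mul, Finset.sum_congr rfl h2]
      exact (Finset.sum_range_reflect (fun j => β^j) m).trans hβ.symm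
    exact mul_right_cancel₀ (ne_of_gt hbm) (h1.trans (one_mul (β^m)).symm)
  -- sign values at k
  have hεk : ε k = -1 := by
    rcases hε k with h | h <;> rcases hε' k with h' | h' <;>
      rw [h, h'] at hk2 <;> first | exact h | linarith
  have hε'k : ε' k = 1 := by
    rcases hε' k with h' | h' <;> [exact h'; skip]
    rcases hε k with h | h <;> rw [h, h'] at hk2 <;> linarith
  -- natural number versions of the sequences
  set E : ℕ → ℝ := fun j => if h : j < m+1 then ε ⟨j, h⟩ else 0 with hEdef
  set E' : ℕ → ℝ := fun j => if h : j < m+1 then ε' ⟨j, h⟩ else 0 with hE'def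
  have hE : ∀ j : Fin (m+1), E (j:ℕ) = ε j := by
    intro j; simp [hEdef, j.isLt, not_lt.mpr (Nat.lt_succ_iff.mp j.isLt)]
  have hE' : ∀ j : Fin (m+1), E' (j:ℕ) = ε' j := by
    intro j; simp [hE'def, j.isLt, not_lt.mpr (Nat.lt_succ_iff.mp j.isLt)]
  set k' : ℕ := (k : ℕ) with hk'def
  have hk'le : k' ≤ m := Nat.lt_succ_iff.mp k.isLt
  have hEk : E k' = -1 := by rw [hE k, hεk]
  have hE'k : E' k' = 1 := by rw [hE' k, hε'k]
  have hagree : ∀ j, j < k' → E j = E' j := by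
    intro j hj
    have hjm : j < m + 1 := by omega
    have : (⟨j, hjm⟩ : Fin (m+1)) < k := by rwa [Fin.lt_def]
    simp only [hEdef, hE'def, dif_pos hjm]
    exact hk1 _ this
  have hbound : ∀ j, -2 ≤ E' j - E j ∧ E' j - E j ≤ 2 := by
    intro j
    by_cases hj : j < m + 1
    · simp only [hEdef, hE'def, dif_pos hj]
      rcases hε ⟨j, hj⟩ with h | h <;> rcases hε' ⟨j, hj⟩ with h' | h' <;>
        rw [h, h'] <;> norm_num
    · simp only [hEdef, hE'def, dif_neg hj]; norm_num
  -- rewrite the Fin sums as range sums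
  have hSε : ∑ j : Fin (m+1), ε j * ρ^((j:ℕ)+1) = ∑ j ∈ range (m+1), E j * ρ^(j+1) := by
    rw [← Fin.sum_univ_eq_sum_range (fun j => E j * ρ^(j+1)) (m+1)]
    exact Finset.sum_congr rfl fun j _ => by rw [hE]
  have hSε' : ∑ j : Fin (m+1), ε' j * ρ^((j:ℕ)+1) = ∑ j ∈ range (m+1), E' j * ρ^(j+1) := by
    rw [← Fin.sum_univ_eq_sum_range (fun j => E' j * ρ^(j+1)) (m+1)]
    exact Finset.sum_congr rfl fun j _ => by rw [hE']
  -- difference sum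
  have hdiff : ∑ j ∈ range (m+1), E' j * ρ^(j+1) - ∑ j ∈ range (m+1), E j * ρ^(j+1)
      = ∑ j ∈ range (m+1), (E' j - E j) * ρ^(j+1) := by
    rw [← Finset.sum_sub_distrib]
    exact Finset.sum_congr rfl fun j _ => by ring
  -- split at k'
  have hsplit : ∑ j ∈ range (m+1), (E' j - E j) * ρ^(j+1)
      = 2 * ρ^(k'+1) + ∑ j ∈ Ico (k'+1) (m+1), (E' j - E j) * ρ^(j+1) := by
    rw [range_eq_Ico, ← Finset.sum_Ico_consecutive _ (Nat.zero_le (k'+1)) (by omega)]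
    congr 1
    rw [← range_eq_Ico, Finset.sum_range_succ, Finset.sum_eq_zero, zero_add, hE'k, hEk]
    · ring
    · intro j hj
      rw [mem_range] at hj
      rw [hagree j hj]; ring
  -- tail computation
  have htail : ∀ t, t ≤ m → ∑ j ∈ Ico (t+1) (m+1), ρ^(j+1)
      = ρ^(t+1) * ∑ i ∈ range (m - t), ρ^(i+1) := by
    intro t ht
    rw [Finset.sum_Ico_eq_sum_range]
    have hmt : m + 1 - (t+1) = m - t := by omega
    rw [hmt, Finset.mul_sum]
    refine Finset.sum_congr rfl fun i _ => ?_
    rw [show t+1+i+1 = (t+1)+(i+1) from by omega, pow_add]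
  have hple : ∀ t, ∑ i ∈ range (m - t), ρ^(i+1) ≤ 1 := by
    intro t
    rw [← hkey]
    apply Finset.sum_le_sum_of_subset_of_nonneg (Finset.range_subset_range.mpr (by omega))
    intros
    positivity
  have hplt : ∀ t, 0 < t → t ≤ m → ∑ i ∈ range (m - t), ρ^(i+1) < 1 := by
    intro t ht htm
    rw [← hkey]
    refine Finset.sum_lt_sum_of_subset (Finset.range_subset_range.mpr (by omega))
      (i := m - t) ?_ ?_ ?_ ?_
    · rw [mem_range]; omega
    · rw [mem_range]; omega
    · positivity
    · intros; positivity
  -- tail bound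
  have htb : -2 * (ρ^(k'+1) * ∑ i ∈ range (m - k'), ρ^(i+1))
      ≤ ∑ j ∈ Ico (k'+1) (m+1), (E' j - E j) * ρ^(j+1) := by
    rw [← htail k' hk'le, Finset.mul_sum]
    apply Finset.sum_le_sum
    intro j _
    have h1 := (hbound j).1
    have h2 : (0:ℝ) < ρ^(j+1) := pow_pos hρ0 _
    nlinarith
  have hρk : (0:ℝ) < ρ^(k'+1) := pow_pos hρ0 _
  have hP := hple k'
  -- main inequality
  have hineq : ∑ j ∈ range (m+1), E j * ρ^(j+1) ≤ ∑ j ∈ range (m+1), E' j * ρ^(j+1) := by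
    nlinarith [hsplit, htb, hdiff]
  refine ⟨by rw [hSε, hSε']; exact hineq, ?_, ?_⟩
  · -- equality → special form
    intro heq
    have hD : ∑ j ∈ range (m+1), (E' j - E j) * ρ^(j+1) = 0 := by
      rw [← hdiff, ← hSε, ← hSε', heq]; ring
    have hk0 : k' = 0 := by
      by_contra h
      have hpos : 0 < k' := Nat.pos_of_ne_zero h
      have hQ := hplt k' hpos hk'le
      nlinarith [hsplit, htb]
    -- tail sum equals ρ
    have htail0 : ∑ j ∈ Ico 1 (m+1), ρ^(j+1) = ρ := by
      have := htail 0 (by omega)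
      simpa [hkey] using this
    have hT : ∑ j ∈ Ico 1 (m+1), (E' j - E j) * ρ^(j+1) = -2 * ρ := by
      have := hsplit
      rw [hk0] at this
      rw [this] at hD
      have : ∑ j ∈ Ico (0+1) (m+1), (E' j - E j) * ρ^(j+1) = -(2 * ρ^(0+1)) := by linarith
      simpa using this
    have hzero : ∑ j ∈ Ico 1 (m+1), (E' j - E j + 2) * ρ^(j+1) = 0 := by
      have hexp : ∑ j ∈ Ico 1 (m+1), (E' j - E j + 2) * ρ^(j+1)
          = (∑ j ∈ Ico 1 (m+1), (E' j - E j) * ρ^(j+1)) + 2 * ∑ j ∈ Ico 1 (m+1), ρ^(j+1) := by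
        rw [Finset.mul_sum, ← Finset.sum_add_distrib]
        exact Finset.sum_congr rfl fun j _ => by ring
      rw [hexp, hT, htail0]; ring
    have hterm : ∀ j ∈ Ico 1 (m+1), (E' j - E j + 2) * ρ^(j+1) = 0 := by
      have := (Finset.sum_eq_zero_iff_of_nonneg ?_).mp hzero
      · exact this
      · intro j _
        have h1 := (hbound j).1
        have h2 : (0:ℝ) < ρ^(j+1) := pow_pos hρ0 _
        nlinarith
    have hflip : ∀ j, 1 ≤ j → j < m + 1 → E j = 1 ∧ E' j = -1 := by
      intro j h1 h2
      have hmem : j ∈ Ico 1 (m+1) := by rw [mem_Ico]; exact ⟨h1, h2⟩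
      have ht := hterm j hmem
      have hrne : ρ^(j+1) ≠ 0 := ne_of_gt (pow_pos hρ0 _)
      have hEE : E' j - E j + 2 = 0 := by
        rcases mul_eq_zero.mp ht with h | h
        · exact h
        · exact absurd h hrne
      simp only [hEdef, hE'def, dif_pos h2] at hEE ⊢
      rcases hε ⟨j, h2⟩ with ha | ha <;> rcases hε' ⟨j, h2⟩ with hb | hb <;>
        rw [ha, hb] at hEE ⊢ <;> norm_num at hEE <;> norm_num
    have hk0' : k = 0 := by
      apply Fin.ext
      simpa [hk'def] using hk0
    have hkv : (k:ℕ) = 0 := by rw [← hk'def]; exact hk0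
    constructor
    · funext j
      by_cases hj : (j:ℕ) = 0
      · have hjk : j = k := by apply Fin.ext; omega
        rw [if_pos hj, hjk]
        exact hεk
      · have h1 : 1 ≤ (j:ℕ) := Nat.one_le_iff_ne_zero.mpr hj
        have := (hflip (j:ℕ) h1 j.isLt).1
        rw [hE] at this
        rw [if_neg hj]
        exact this
    · funext j
      by_cases hj : (j:ℕ) = 0
      · have hjk : j = k := by apply Fin.ext; omega
        rw [if_pos hj, hjk]
        exact hε'k
      · have h1 : 1 ≤ (j:ℕ) := Nat.one_le_iff_ne_zero.mpr hj
        have := (hflip (j:ℕ) h1 j.isLt).2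
        rw [hE'] at this
        rw [if_neg hj]
        exact this
  · -- special form → equality
    rintro ⟨hεf, hε'f⟩
    have htail0 : ∑ i ∈ range m, ρ^(i+1+1) = ρ := by
      have : ∀ i ∈ range m, ρ^(i+1+1) = ρ * ρ^(i+1) := by
        intro i _
        rw [← pow_succ']
      rw [Finset.sum_congr rfl this, ← Finset.mul_sum, hkey, mul_one]
    rw [hεf, hε'f]
    rw [Fin.sum_univ_eq_sum_range (fun j => (if j = 0 then (-1:ℝ) else 1) * ρ^(j+1)) (m+1)]
    rw [Fin.sum_univ_eq_sum_range (fun j => (if j = 0 then (1:ℝ) else -1) * ρ^(j+1)) (m+1)]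
    rw [Finset.sum_range_succ', Finset.sum_range_succ']
    simp only [Nat.succ_ne_zero, if_neg, if_pos, Nat.add_eq_zero, one_ne_zero, and_false,
      ite_false, ite_true, pow_one, one_mul, neg_one_mul]
    rw [htail0, Finset.sum_neg_distrib, htail0]
    ring
end

section
/- Let m ≥ 2 be an even integer. The polynomial f(x) = x^{m+1} − 2x^m + 2x − 2 has exactly one real root, and this root lies in the open interval (1, 2). -/
open Set

/-- Second-order Bernoulli: `2*(1+u)^n ≥ 2 + 2nu + n(n-1)u²` for `u ≥ 0`. -/
lemma bern2_aux (n : ℕ) (u : ℝ) (hu : 0 ≤ u) :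
    2 + 2*(n:ℝ)*u + (n:ℝ)*((n:ℝ)-1)*u^2 ≤ 2*(1+u)^n := by
  induction n with
  | zero => norm_num
  | succ n ih =>
    have h1 : (0:ℝ) ≤ (1+u)^n := by positivity
    have h2 : (2 + 2*(n:ℝ)*u + (n:ℝ)*((n:ℝ)-1)*u^2)*(1+u) ≤ (2*(1+u)^n)*(1+u) :=
      mul_le_mul_of_nonneg_right ih (by linarith)
    have h3 : 2*(1+u)^(n+1) = (2*(1+u)^n)*(1+u) := by ring
    have hnn : (0:ℝ) ≤ (n:ℝ)*((n:ℝ)-1) := by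
      rcases Nat.eq_zero_or_pos n with h | h
      · simp [h]
      · have h1 : (1:ℝ) ≤ (n:ℝ) := by exact_mod_cast h
        nlinarith
    push_cast
    nlinarith [mul_nonneg hnn (by positivity : (0:ℝ) ≤ u^3)]

/-- Key positivity: for `x ≥ 1`, `x^(k+3) - 2(k+1)x + 2(k+2) > 0`. -/
lemma keyA_aux (k : ℕ) (x : ℝ) (hx : 1 ≤ x) :
    0 < x^(k+3) - 2*((k:ℝ)+1)*x + 2*((k:ℝ)+2) := by
  set u : ℝ := x - 1 with hu'
  have hu : 0 ≤ u := by simp [hu']; linarith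
  have hx' : x = 1 + u := by simp [hu']
  have hb := bern2_aux (k+3) u hu
  push_cast at hb
  rw [show (1:ℝ) + u = x by simp [hu']] at hb
  have hk : (0:ℝ) ≤ k := Nat.cast_nonneg k
  nlinarith [sq_nonneg (((k:ℝ)+1)*u - 1), mul_nonneg hu hu,
    mul_nonneg (mul_nonneg hk hu) hu]

theorem stmt_7 (m : ℕ) (hm : 2 ≤ m) (hme : Even m) :
    (∃! x : ℝ, x ^ (m + 1) - 2 * x ^ m + 2 * x - 2 = 0) ∧
    (∀ x : ℝ, x ^ (m + 1) - 2 * x ^ m + 2 * x - 2 = 0 → x ∈ Set.Ioo (1 : ℝ) 2) := by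
  obtain ⟨k, rfl⟩ : ∃ k, m = k + 2 := ⟨m - 2, by omega⟩
  set f : ℝ → ℝ := fun x => x ^ (k + 2 + 1) - 2 * x ^ (k + 2) + 2 * x - 2 with hf
  -- sign lemmas
  have hneg : ∀ x : ℝ, x ≤ 1 → f x < 0 := by
    intro x hx
    have hxm : 0 ≤ x ^ (k+2) := hme.pow_nonneg x
    rcases eq_or_lt_of_le hx with h1 | h1
    · rw [h1]; simp only [hf]; norm_num
    · have h2 : 0 ≤ x^(k+2)*(2-x) := mul_nonneg hxm (by linarith)
      have hxx : x^(k+2+1) = x^(k+2)*x := by ring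
      simp only [hf]
      nlinarith
  have hpos : ∀ x : ℝ, 2 ≤ x → 0 < f x := by
    intro x hx
    have hxm : 0 ≤ x ^ (k+2) := hme.pow_nonneg x
    have h2 : 0 ≤ x^(k+2)*(x-2) := mul_nonneg hxm (by linarith)
    have hxx : x^(k+2+1) = x^(k+2)*x := by ring
    simp only [hf]
    nlinarith
  have hroots : ∀ x : ℝ, f x = 0 → x ∈ Set.Ioo (1:ℝ) 2 := by
    intro x hx
    constructor
    · by_contra h; push_neg at h
      have := hneg x h; rw [hx] at this; exact lt_irrefl 0 this
    · by_contra h; push_neg at h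
      have := hpos x h; rw [hx] at this; exact lt_irrefl 0 this
  -- continuity
  have hcontf : Continuous f := by fun_prop
  -- existence via IVT
  have hf1 : f 1 = -1 := by norm_num [hf]
  have hf2 : f 2 = 2 := by
    have h22 : (2:ℝ)^(k+2+1) = 2*2^(k+2) := by ring
    simp only [hf]; rw [h22]; ring
  have hivt := intermediate_value_Ioo (by norm_num : (1:ℝ) ≤ 2) hcontf.continuousOn
  have h0mem : (0:ℝ) ∈ Ioo (f 1) (f 2) := by rw [hf1, hf2]; norm_num
  obtain ⟨c, hcmem, hfc⟩ := hivt h0mem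
  -- strict monotonicity of f x / x^(k+2) on [1,2]
  have hmono : StrictMonoOn (fun x => f x / x^(k+2)) (Icc (1:ℝ) 2) := by
    apply strictMonoOn_of_deriv_pos (convex_Icc 1 2)
    · apply ContinuousOn.div hcontf.continuousOn (by fun_prop)
      intro x hx
      have : (0:ℝ) < x := lt_of_lt_of_le one_pos hx.1
      positivity
    · intro x hx
      rw [interior_Icc] at hx
      have hx1 : (1:ℝ) < x := hx.1
      have hx0 : (0:ℝ) < x := by linarith
      have hd1 : HasDerivAt f ((k+2+1:ℝ)*x^(k+2) - 2*((k+2:ℝ)*x^(k+1)) + 2) x := by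
        have ha := hasDerivAt_pow (k+2+1) x
        have hb := hasDerivAt_pow (k+2) x
        have hc := hasDerivAt_id x
        have := ((ha.sub (hb.const_mul 2)).add (hc.const_mul 2)).sub_const 2
        simp only [hf]
        refine this.congr_deriv ?_
        push_cast
        ring
      have hd2 : HasDerivAt (fun y:ℝ => y^(k+2)) ((k+2:ℝ)*x^(k+1)) x := by
        have := hasDerivAt_pow (k+2) x
        refine this.congr_deriv ?_
        push_cast
        ring
      have hne : x^(k+2) ≠ 0 := by positivity
      have hd := hd1.div hd2 hne
      rw [show (fun x => f x / x ^ (k + 2)) = (f / fun y => y ^ (k + 2)) from rfl, hd.deriv]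
      apply div_pos
      · have key := keyA_aux k x hx1.le
        have hrw : ((k+2+1:ℝ)*x^(k+2) - 2*((k+2:ℝ)*x^(k+1)) + 2) * x^(k+2)
            - f x * ((k+2:ℝ)*x^(k+1))
            = x^(k+1) * (x^(k+3) - 2*((k:ℝ)+1)*x + 2*((k:ℝ)+2)) := by
          simp only [hf]
          ring
        rw [hrw]
        exact mul_pos (by positivity) key
      · positivity
  -- uniqueness
  have huniq : ∀ y : ℝ, f y = 0 → y = c := by
    intro y hy
    have hyI := hroots y hy
    have hcI := hroots c hfc
    have h1 : y ∈ Icc (1:ℝ) 2 := Ioo_subset_Icc_self hyI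
    have h2 : c ∈ Icc (1:ℝ) 2 := Ioo_subset_Icc_self hcI
    apply hmono.injOn h1 h2
    simp only [hy, hfc, zero_div]
  exact ⟨⟨c, hfc, huniq⟩, hroots⟩
end

section
/- Let m ≥ 2 be an even integer, and let λ be the unique real root of x^{m+1} = 2x^m − 2x + 2. Then every complex root z of z^{m+1} − 2z^m + 2z − 2 = 0 other than λ satisfies |z| < 3/2 < λ; in particular λ is the unique root of largest absolute value. -/
open Finset

private lemma aux_pow32 (n : ℕ) (hn : 2 ≤ n) : (n : ℝ) < (3/2 : ℝ) ^ n := by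
  induction n, hn using Nat.le_induction with
  | base => norm_num
  | succ k hk ih =>
    have hk2 : (2:ℝ) ≤ (k:ℝ) := by exact_mod_cast hk
    have h0 : (0:ℝ) < (3/2:ℝ)^k := by positivity
    push_cast
    calc (k:ℝ) + 1 ≤ (3/2) * k := by linarith
    _ < (3/2) * (3/2)^k := by nlinarith
    _ = (3/2)^(k+1) := by ring

private lemma aux_bern (u : ℝ) (hu : 0 < u) (m : ℕ) (hm : 2 ≤ m) :
    1 + (m:ℝ) * u < (1+u)^m := by
  obtain ⟨k, rfl⟩ : ∃ k, m = k + 2 := ⟨m - 2, by omega⟩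
  have h1 : 1 + (k:ℝ)*u ≤ (1+u)^k := one_add_mul_le_pow (by linarith) k
  have h2 : (0:ℝ) < (1+u)^2 := by positivity
  have h3 : (1+u)^(k+2) = (1+u)^k * (1+u)^2 := by ring
  have h4 : (1 + (k:ℝ)*u) * (1+u)^2 ≤ (1+u)^k * (1+u)^2 :=
    mul_le_mul_of_nonneg_right h1 h2.le
  have hk0 : (0:ℝ) ≤ (k:ℝ) := Nat.cast_nonneg k
  rw [h3]
  push_cast
  nlinarith [mul_nonneg (mul_nonneg hk0 hu.le) (mul_nonneg hu.le hu.le),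
    mul_nonneg (mul_nonneg hk0 hu.le) hu.le, mul_pos hu hu]

set_option maxHeartbeats 2000000 in
theorem stmt_9 (m : ℕ) (hm : 2 ≤ m) (hme : Even m) (lam : ℝ)
    (hlam : lam ∈ Set.Ioo (1 : ℝ) 2)
    (hroot : lam ^ (m + 1) - 2 * lam ^ m + 2 * lam - 2 = 0) :
    (3 : ℝ) / 2 < lam ∧
    ∀ z : ℂ, z ^ (m + 1) - 2 * z ^ m + 2 * z - 2 = 0 → z ≠ (lam : ℂ) →
      ‖z‖ < 3 / 2 := by
  obtain ⟨hl1, hl2⟩ := hlam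
  have hl0 : (0:ℝ) < lam := by linarith
  have hmR : (2:ℝ) ≤ (m:ℝ) := by exact_mod_cast hm
  have key : lam ^ m * (2 - lam) = 2 * (lam - 1) := by
    have hp : lam ^ (m+1) = lam ^ m * lam := pow_succ lam m
    linear_combination -hroot + hp
  -- Part A : 3/2 < lam
  have h32 : 3/2 < lam := by
    by_contra hc
    push_neg at hc
    have h2 : lam^2 ≤ lam^m := pow_le_pow_right₀ (le_of_lt hl1) hm
    have h3 : lam^2*(2-lam) ≤ lam^m*(2-lam) :=
      mul_le_mul_of_nonneg_right h2 (by linarith)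
    nlinarith [h3, key, mul_nonneg (show (0:ℝ) ≤ 3/2 - lam by linarith) (sq_nonneg (lam - 1/4))]
  -- L1 : 2m < (m+1) lam
  have hL1 : 2*(m:ℝ) < ((m:ℝ)+1) * lam := by
    by_contra hc
    push_neg at hc
    have hm4 : (4:ℝ) ≤ (m:ℝ) := by
      rcases Nat.lt_or_ge m 4 with h4 | h4
      · exfalso
        have h3 : (m:ℝ) ≤ 3 := by exact_mod_cast Nat.lt_succ_iff.mp h4
        have hmul : ((m:ℝ)+1)*(3/2) ≤ ((m:ℝ)+1)*lam :=
          mul_le_mul_of_nonneg_left h32.le (by linarith)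
        nlinarith [hc, hmul]
      · exact_mod_cast h4
    have hb : 1 + (m:ℝ)*(lam - 1) ≤ lam^m := by
      have h := one_add_mul_le_pow (a := lam - 1) (by linarith) m
      have he : (1 + (lam - 1)) = lam := by ring
      rwa [he] at h
    have hA : (1 + (m:ℝ)*(lam-1)) * (2 - lam) ≤ lam^m * (2-lam) :=
      mul_le_mul_of_nonneg_right hb (by linarith)
    -- Q' : m u^2 - (m-3) u - 1 ≥ 0 where u = lam - 1
    have hQ : (0:ℝ) ≤ (m:ℝ)*(lam-1)^2 - ((m:ℝ)-3)*(lam-1) - 1 := by nlinarith [hA, key]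
    have hv : (0:ℝ) ≤ (m:ℝ) - 1 - ((m:ℝ)+1)*(lam-1) := by nlinarith [hc]
    have hu : (1:ℝ)/2 < lam - 1 := by linarith
    have hvu : (m:ℝ) - 1 - ((m:ℝ)+1)*(lam-1) ≤ ((m:ℝ)-3)/2 := by nlinarith [hu, hm4]
    have hid : ((m:ℝ)+1)^2 * ((m:ℝ)*(lam-1)^2 - ((m:ℝ)-3)*(lam-1) - 1)
        = (m:ℝ)*((m:ℝ) - 1 - ((m:ℝ)+1)*(lam-1))^2
          - ((m:ℝ)^2+3)*((m:ℝ) - 1 - ((m:ℝ)+1)*(lam-1)) - 4 := by ring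
    have h5 : ((m:ℝ)*((m:ℝ) - 1 - ((m:ℝ)+1)*(lam-1))) * ((m:ℝ) - 1 - ((m:ℝ)+1)*(lam-1))
        ≤ ((m:ℝ)*((m:ℝ) - 1 - ((m:ℝ)+1)*(lam-1))) * (((m:ℝ)-3)/2) :=
      mul_le_mul_of_nonneg_left hvu (mul_nonneg (by linarith) hv)
    nlinarith [hQ, hid, h5, hv, hm4, mul_nonneg hv (show (0:ℝ) ≤ (m:ℝ)^2+3 - (m:ℝ)*(((m:ℝ)-3)/2) by nlinarith [hm4])]
  -- strict Bernoulli
  have hBs : 1 + (m:ℝ)*(lam - 1) < lam^m := by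
    have h := aux_bern (lam - 1) (by linarith) m hm
    have he : (1 + (lam - 1)) = lam := by ring
    rwa [he] at h
  refine ⟨h32, ?_⟩
  intro z hz hne
  by_contra hcon
  push_neg at hcon
  set r : ℝ := ‖z‖ with hr_def
  have hr : 3/2 ≤ r := hcon
  have hr0 : (0:ℝ) < r := by linarith
  obtain ⟨k, hk1, hkm⟩ : ∃ k, 1 ≤ k ∧ m = k + 1 := ⟨m-1, by omega, by omega⟩
  subst hkm
  have hkR : (1:ℝ) ≤ (k:ℝ) := by exact_mod_cast hk1
  push_cast at hmR hL1 hBs key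
  -- key : lam^(k+1) * (2-lam) = 2*(lam-1)
  set L : ℂ := (lam : ℂ) with hL
  have hzL : z - L ≠ 0 := sub_ne_zero.mpr hne
  have keyC : L^(k+1) * (2 - L) = 2*(L - 1) := by
    rw [hL]; exact_mod_cast key
  set S : ℂ := ∑ i ∈ Finset.range k, L^i * z^(k-1-i) with hS
  have htel : S * (L - z) = L^k - z^k := geom_sum₂_mul L z k
  have ht2 : (z - L)*S = z^k - L^k := by linear_combination -htel
  have hQzero : L*z^(k+1) + 2 = L*(2-L)*z*S := by
    have hmain : (z - L) * (L*z^(k+1) + L*(L-2)*z*S + 2)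
        = L*(z^(k+1+1) - 2*z^(k+1) + 2*z - 2) := by
      linear_combination (L*(L-2)*z) * ht2 + z * keyC
    have h0 : (z - L) * (L*z^(k+1) + L*(L-2)*z*S + 2) = 0 := by
      rw [hmain, hz, mul_zero]
    have h1 : L*z^(k+1) + L*(L-2)*z*S + 2 = 0 := by
      rcases mul_eq_zero.mp h0 with h|h
      · exact absurd h hzL
      · exact h
    linear_combination h1
  -- absolute values
  have habsL : ‖L‖ = lam := by
    rw [hL, Complex.norm_real, Real.norm_eq_abs]; exact abs_of_pos hl0
  have habs2L : ‖2 - L‖ = 2 - lam := by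
    have : (2:ℂ) - L = ((2 - lam : ℝ) : ℂ) := by rw [hL]; push_cast; ring
    rw [this, Complex.norm_real, Real.norm_eq_abs]; exact abs_of_pos (by linarith)
  set SR : ℝ := ∑ i ∈ Finset.range k, lam^i * r^(k-1-i) with hSR
  have hSabs : ‖S‖ ≤ SR := by
    rw [hS, hSR]
    refine (norm_sum_le _ _).trans ?_
    refine Finset.sum_le_sum fun i _ => ?_
    rw [norm_mul, norm_pow, norm_pow, habsL]
  have habs : lam * r^(k+1) - 2 ≤ lam*(2-lam) * r * SR := by
    have e1 : ‖L*z^(k+1) + 2‖ = lam*(2-lam)*r*‖S‖ := by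
      rw [hQzero, norm_mul, norm_mul, norm_mul, habsL, habs2L, ← hr_def]
    have e2 : lam * r^(k+1) ≤ ‖L*z^(k+1) + 2‖ + 2 := by
      have h := norm_add_le (L*z^(k+1) + 2) (-2)
      have h2 : (L*z^(k+1) + 2) + (-2 : ℂ) = L*z^(k+1) := by ring
      rw [h2, norm_mul, norm_pow, habsL, ← hr_def] at h
      simpa using h
    have e3 : lam*(2-lam)*r*‖S‖ ≤ lam*(2-lam)*r*SR :=
      mul_le_mul_of_nonneg_left hSabs
        (mul_nonneg (mul_nonneg hl0.le (by linarith)) (le_of_lt hr0))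
    rw [e1] at e2
    linarith [e2, e3]
  have hps : lam^(k+1) = lam^k * lam := pow_succ lam k
  have hpr : r^(k+1) = r^k * r := pow_succ r k
  have key2 : lam*(2-lam)*lam^k = 2*(lam-1) := by
    linear_combination key + (lam - 2)*hps
  rcases lt_or_ge r lam with hrl | hlr
  · -- case r < lam
    have hd : (0:ℝ) < lam - r := by linarith
    have htelR : SR * (lam - r) = lam^k - r^k := geom_sum₂_mul lam r k
    have ht3 : (∑ i ∈ Finset.range (k+1), lam^i * r^(k-i)) * (lam - r)
        = lam^(k+1) - r^(k+1) := by
      have h := geom_sum₂_mul lam r (k+1)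
      simpa using h
    have hbound : (∑ i ∈ Finset.range (k+1), lam^i * r^(k-i)) ≤ ((k:ℝ)+1) * lam^k := by
      have hterm : ∀ i ∈ Finset.range (k+1), lam^i * r^(k-i) ≤ lam^k := by
        intro i hi
        have hik : i ≤ k := by
          have := Finset.mem_range.mp hi; omega
        have h1 : r^(k-i) ≤ lam^(k-i) := pow_le_pow_left₀ hr0.le hrl.le _
        calc lam^i * r^(k-i) ≤ lam^i * lam^(k-i) :=
              mul_le_mul_of_nonneg_left h1 (pow_nonneg hl0.le i)
          _ = lam^(i + (k-i)) := (pow_add lam i (k-i)).symm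
          _ = lam^k := by congr 1; omega
      calc (∑ i ∈ Finset.range (k+1), lam^i * r^(k-i))
          ≤ ∑ _i ∈ Finset.range (k+1), lam^k := Finset.sum_le_sum hterm
        _ = ((k:ℝ)+1) * lam^k := by
            rw [Finset.sum_const, Finset.card_range, nsmul_eq_mul]; push_cast; ring
    have hsum2 : lam^(k+1) - r^(k+1) ≤ (lam - r) * (((k:ℝ)+1) * lam^k) := by
      rw [← ht3, mul_comm (lam - r)]
      exact mul_le_mul_of_nonneg_right hbound hd.le
    have hP6 : ((k:ℝ)+1) < (3/2:ℝ)^(k+1) := by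
      have h := aux_pow32 (k+1) (by omega)
      push_cast at h; exact h
    have hrp : (3/2:ℝ)^(k+1) ≤ r^(k+1) := pow_le_pow_left₀ (by norm_num) hr _
    have hN : 2 + 2*(k:ℝ)*(lam - 1) < lam * r^(k+1) := by
      have h1 : lam*((k:ℝ)+1) < lam * r^(k+1) :=
        mul_lt_mul_of_pos_left (lt_of_lt_of_le hP6 hrp) hl0
      have hklam : (0:ℝ) ≤ (2-lam)*((k:ℝ)-1) := mul_nonneg (by linarith) (by linarith)
      nlinarith [h1, hklam]
    have hA2 : (lam * r^(k+1) - 2) * (lam - r) ≤ (lam*(2-lam)*r) * (lam^k - r^k) := by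
      have h := mul_le_mul_of_nonneg_right habs hd.le
      calc (lam * r^(k+1) - 2) * (lam - r) ≤ lam*(2-lam)*r*SR * (lam - r) := h
        _ = (lam*(2-lam)*r) * (SR * (lam - r)) := by ring
        _ = (lam*(2-lam)*r) * (lam^k - r^k) := by rw [htelR]
    have hfac : (0:ℝ) ≤ lam*(2-lam) := mul_nonneg hl0.le (by linarith)
    have hB : lam*(2-lam)*(lam^(k+1) - r^(k+1))
        ≤ lam*(2-lam)*((lam - r) * (((k:ℝ)+1) * lam^k)) :=
      mul_le_mul_of_nonneg_left hsum2 hfac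
    have hBr : lam*(2-lam)*((lam - r) * (((k:ℝ)+1) * lam^k))
        = (lam-r)*((k:ℝ)+1)*(2*(lam-1)) := by
      linear_combination ((lam-r)*((k:ℝ)+1)) * key2
    have key3 : lam*(2-lam)*lam^(k+1) = lam*(2*(lam-1)) := by
      linear_combination lam * key
    have hB2 : lam*(2*(lam-1)) - lam*(2-lam)*r^(k+1) ≤ (lam-r)*((k:ℝ)+1)*(2*(lam-1)) := by
      rw [← hBr, ← key3]; linarith [hB]
    have hA2' : (lam*r^(k+1) - 2)*(lam - r) ≤ 2*r*(lam-1) - lam*(2-lam)*r^(k+1) := by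
      have e7 : (lam*(2-lam)*r) * (lam^k - r^k) = 2*r*(lam-1) - lam*(2-lam)*r^(k+1) := by
        linear_combination r * key2 + (lam*(2-lam))*hpr
      linarith [hA2, e7.le, e7.ge]
    have hNpos : (0:ℝ) < lam*r^(k+1) - 2 - 2*(k:ℝ)*(lam-1) := by linarith
    nlinarith [hA2', hB2, mul_pos hd hNpos]
  · -- case lam ≤ r
    have hSRb : SR ≤ (k:ℝ) * r^(k-1) := by
      rw [hSR]
      have hterm : ∀ i ∈ Finset.range k, lam^i * r^(k-1-i) ≤ r^(k-1) := by
        intro i hi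
        have hik : i < k := Finset.mem_range.mp hi
        have h1 : lam^i ≤ r^i := pow_le_pow_left₀ hl0.le hlr i
        calc lam^i * r^(k-1-i) ≤ r^i * r^(k-1-i) :=
              mul_le_mul_of_nonneg_right h1 (pow_nonneg hr0.le _)
          _ = r^(i + (k-1-i)) := (pow_add r i _).symm
          _ = r^(k-1) := by congr 1; omega
      calc (∑ i ∈ Finset.range k, lam^i * r^(k-1-i))
          ≤ ∑ _i ∈ Finset.range k, r^(k-1) := Finset.sum_le_sum hterm
        _ = (k:ℝ)*r^(k-1) := by
            rw [Finset.sum_const, Finset.card_range, nsmul_eq_mul]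
    have hpr1 : r * r^(k-1) = r^k := by
      rw [← pow_succ']; congr 1; omega
    have h6 : lam*(2-lam)*r*SR ≤ lam*(2-lam)*r*((k:ℝ)*r^(k-1)) :=
      mul_le_mul_of_nonneg_left hSRb
        (mul_nonneg (mul_nonneg hl0.le (by linarith)) (le_of_lt hr0))
    have e6 : lam*(2-lam)*r*((k:ℝ)*r^(k-1)) = (k:ℝ)*(lam*(2-lam))*r^k := by
      linear_combination ((k:ℝ)*lam*(2-lam))*hpr1
    have hc1 : lam*r^(k+1) - 2 ≤ (k:ℝ)*(lam*(2-lam))*r^k := by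
      rw [← e6]; linarith [habs, h6]
    have hbpos : (0:ℝ) < lam - (k:ℝ)*(2-lam) := by
      nlinarith [hL1]
    have hrk : lam^k ≤ r^k := pow_le_pow_left₀ hl0.le hlr k
    have hstep : lam^k * (lam - (k:ℝ)*(2-lam)) ≤ r^k * (r - (k:ℝ)*(2-lam)) :=
      mul_le_mul hrk (by linarith) hbpos.le (pow_nonneg hr0.le k)
    have hstep2 : lam*(lam^k * (lam - (k:ℝ)*(2-lam))) ≤ lam*(r^k * (r - (k:ℝ)*(2-lam))) :=
      mul_le_mul_of_nonneg_left hstep hl0.le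
    have e4 : lam*(lam^k * (lam - (k:ℝ)*(2-lam)))
        = 2*lam^(k+1) - 2*((k:ℝ)+1)*(lam-1) := by
      linear_combination (-(lam - (k:ℝ)*(2-lam)))*hps - ((k:ℝ)+1)*key
    have e5 : lam*(r^k * (r - (k:ℝ)*(2-lam)))
        = lam*r^(k+1) - (k:ℝ)*(lam*(2-lam))*r^k := by
      linear_combination -lam*hpr
    rw [e4, e5] at hstep2
    linarith [hc1, hstep2, hBs]
end

section
/- Let β > 1. The total variation ‖ν_β^{(n)}‖ of the signed measure ν_β^{(n)} = *_{j=1}^n ((1/2)δ_{β^{-j}} − (1/2)δ_{−β^{-j}}) is strictly less than 1 if and only if there exist signs η_0, …, η_{n−1} ∈ {0, ±1}, with η_0 + ⋯ + η_{n−1} odd, such that Σ_{j=0}^{n−1} η_j β^j = 0. -/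
open MeasureTheory

/-- The signed Bernoulli convolution ν_β^{(n)} = 2^{-n} Σ_{ε∈{±1}^n} ε₁⋯εₙ δ_{Σ εⱼ β^{-j}}. -/
noncomputable def signedBernoulli (β : ℝ) (n : ℕ) : SignedMeasure ℝ :=
  (2 ^ n : ℝ)⁻¹ • ∑ ε : Fin n → Bool,
    (∏ j, (if ε j then (1 : ℝ) else -1)) •
      (Measure.dirac (∑ j : Fin n, (if ε j then (1 : ℝ) else -1) *
        β ^ (-((j : ℕ) : ℤ) - 1))).toSignedMeasure

/-- Total variation norm of ν_β^{(n)}. -/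
noncomputable def signedBernoulliTV (β : ℝ) (n : ℕ) : ℝ :=
  ((signedBernoulli β n).totalVariation Set.univ).toReal

section Aux


theorem vsum_apply {ι : Type*} (S : Finset ι) (v : ι → SignedMeasure ℝ) (A : Set ℝ) :
    (∑ x ∈ S, v x) A = ∑ x ∈ S, v x A := by
  classical
  induction S using Finset.induction with
  | empty => simp
  | insert a s h ih => rw [Finset.sum_insert h, VectorMeasure.add_apply, ih, Finset.sum_insert h]

instance fsum (S : Finset ℝ) (c : ℝ → ℝ) :
    IsFiniteMeasure (∑ x ∈ S, ENNReal.ofReal (c x) • Measure.dirac x) := by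
  constructor
  rw [Measure.finset_sum_apply]
  refine ENNReal.sum_lt_top.2 fun x hx => ?_
  simp [ENNReal.ofReal_lt_top, ENNReal.mul_lt_top, Measure.smul_apply]

noncomputable def diracComb (S : Finset ℝ) (c : ℝ → ℝ) : JordanDecomposition ℝ where
  posPart := ∑ x ∈ S, ENNReal.ofReal (c x) • Measure.dirac x
  negPart := ∑ x ∈ S, ENNReal.ofReal (-c x) • Measure.dirac x
  mutuallySingular := by
    classical
    refine ⟨(S.filter (fun x => c x ≤ 0) : Finset ℝ), (Finset.finite_toSet _).measurableSet, ?_, ?_⟩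
    · rw [Measure.finset_sum_apply]
      refine Finset.sum_eq_zero fun x hx => ?_
      by_cases h : c x ≤ 0
      · simp [ENNReal.ofReal_eq_zero.2 h]
      · rw [Measure.smul_apply, Measure.dirac_apply' _ (Finset.finite_toSet _).measurableSet]
        have hx' : x ∉ (↑(S.filter (fun x => c x ≤ 0)) : Set ℝ) := by
          simp only [Finset.coe_filter, Set.mem_setOf_eq, not_and]
          intro _; exact h
        simp only [Set.indicator_of_notMem hx', smul_eq_mul, mul_zero]
    · rw [Measure.finset_sum_apply]
      refine Finset.sum_eq_zero fun x hx => ?_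
      by_cases h : c x ≤ 0
      · rw [Measure.smul_apply,
          Measure.dirac_apply' _ (Finset.finite_toSet _).measurableSet.compl]
        have hx' : x ∉ (↑(S.filter (fun x => c x ≤ 0)) : Set ℝ)ᶜ := by
          simp [Finset.mem_filter, hx, h]
        simp only [Set.indicator_of_notMem hx', smul_eq_mul, mul_zero]
      · simp [ENNReal.ofReal_eq_zero.2 (by linarith : -c x ≤ 0)]

theorem diracComb_toSignedMeasure (S : Finset ℝ) (c : ℝ → ℝ) :
    (diracComb S c).toSignedMeasure
      = ∑ x ∈ S, c x • (Measure.dirac x).toSignedMeasure := by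
  ext A hA
  rw [JordanDecomposition.toSignedMeasure, Measure.toSignedMeasure_sub_apply hA]
  have hfin : ∀ (d : ℝ → ℝ) , ((∑ y ∈ S, ENNReal.ofReal (d y) • Measure.dirac y) A).toReal
      = ∑ y ∈ S, (ENNReal.ofReal (d y)).toReal * (Measure.dirac y A).toReal := by
    intro d
    rw [Measure.finset_sum_apply, ENNReal.toReal_sum]
    · refine Finset.sum_congr rfl fun y hy => ?_
      rw [Measure.smul_apply, smul_eq_mul, ENNReal.toReal_mul]
    · intro y hy
      exact ENNReal.mul_ne_top ENNReal.ofReal_ne_top (measure_ne_top _ _)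
  show ((diracComb S c).posPart A).toReal - ((diracComb S c).negPart A).toReal = _
  rw [show (diracComb S c).posPart = ∑ x ∈ S, ENNReal.ofReal (c x) • Measure.dirac x from rfl,
    show (diracComb S c).negPart = ∑ x ∈ S, ENNReal.ofReal (-c x) • Measure.dirac x from rfl,
    hfin, hfin, ← Finset.sum_sub_distrib, vsum_apply]
  refine Finset.sum_congr rfl fun x hx => ?_
  rw [VectorMeasure.smul_apply, Measure.toSignedMeasure_apply_measurable hA,
    ENNReal.toReal_ofReal', ENNReal.toReal_ofReal', ← sub_mul, smul_eq_mul]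
  congr 1
  rcases le_total (c x) 0 with h | h
  · rw [max_eq_right h, max_eq_left (by linarith)]; ring
  · rw [max_eq_left h, max_eq_right (by linarith)]; ring

theorem diracComb_tv (S : Finset ℝ) (c : ℝ → ℝ) :
    ((∑ x ∈ S, c x • (Measure.dirac x).toSignedMeasure :
      SignedMeasure ℝ).totalVariation Set.univ).toReal = ∑ x ∈ S, |c x| := by
  rw [← diracComb_toSignedMeasure, SignedMeasure.totalVariation,
    JordanDecomposition.toJordanDecomposition_toSignedMeasure]
  rw [Measure.add_apply]
  rw [show (diracComb S c).posPart = ∑ x ∈ S, ENNReal.ofReal (c x) • Measure.dirac x from rfl,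
    show (diracComb S c).negPart = ∑ x ∈ S, ENNReal.ofReal (-c x) • Measure.dirac x from rfl,
    Measure.finset_sum_apply, Measure.finset_sum_apply, ← Finset.sum_add_distrib]
  rw [ENNReal.toReal_sum]
  · refine Finset.sum_congr rfl fun x hx => ?_
    rw [Measure.smul_apply, Measure.smul_apply, smul_eq_mul, smul_eq_mul,
      Measure.dirac_apply_of_mem (Set.mem_univ x), mul_one, mul_one,
      ENNReal.toReal_add ENNReal.ofReal_ne_top ENNReal.ofReal_ne_top,
      ENNReal.toReal_ofReal', ENNReal.toReal_ofReal']
    rcases le_total (c x) 0 with h | h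
    · rw [max_eq_right h, max_eq_left (by linarith), abs_of_nonpos h]; ring
    · rw [max_eq_left h, max_eq_right (by linarith), abs_of_nonneg h]; ring
  · intro x hx
    exact ENNReal.add_ne_top.2 ⟨ENNReal.mul_ne_top ENNReal.ofReal_ne_top (measure_ne_top _ _),
      ENNReal.mul_ne_top ENNReal.ofReal_ne_top (measure_ne_top _ _)⟩

variable (β : ℝ) (n : ℕ)

noncomputable def bval (ε : Fin n → Bool) : ℝ :=
  ∑ j : Fin n, (if ε j then (1 : ℝ) else -1) * β ^ (-((j : ℕ) : ℤ) - 1)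

noncomputable def bwgt (ε : Fin n → Bool) : ℝ := ∏ j, (if ε j then (1 : ℝ) else -1)

noncomputable def bS : Finset ℝ := Finset.univ.image (bval β n)

noncomputable def bc (x : ℝ) : ℝ :=
  (2 ^ n : ℝ)⁻¹ * ∑ ε ∈ Finset.univ.filter (fun ε => bval β n ε = x), bwgt n ε

theorem signedBernoulli_eq :
    signedBernoulli β n = ∑ x ∈ bS β n, bc β n x • (Measure.dirac x).toSignedMeasure := by
  classical
  rw [signedBernoulli]
  have : (∑ ε : Fin n → Bool, bwgt n ε • (Measure.dirac (bval β n ε)).toSignedMeasure)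
      = ∑ x ∈ bS β n, ∑ ε ∈ Finset.univ.filter (fun ε => bval β n ε = x),
          bwgt n ε • (Measure.dirac x).toSignedMeasure := by
    rw [← Finset.sum_fiberwise_of_maps_to (t := bS β n) (g := bval β n)
      (fun ε _ => Finset.mem_image_of_mem _ (Finset.mem_univ ε))
      (fun ε => bwgt n ε • (Measure.dirac (bval β n ε)).toSignedMeasure)]
    refine Finset.sum_congr rfl fun x hx => Finset.sum_congr rfl fun ε hε => ?_
    rw [(Finset.mem_filter.1 hε).2]
  rw [show (∑ ε : Fin n → Bool,
      (∏ j, (if ε j then (1 : ℝ) else -1)) •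
      (Measure.dirac (∑ j : Fin n, (if ε j then (1 : ℝ) else -1) *
        β ^ (-((j : ℕ) : ℤ) - 1))).toSignedMeasure)
      = ∑ ε : Fin n → Bool, bwgt n ε • (Measure.dirac (bval β n ε)).toSignedMeasure from rfl,
    this, Finset.smul_sum]
  refine Finset.sum_congr rfl fun x hx => ?_
  rw [← Finset.sum_smul, smul_smul, bc]

theorem signedBernoulliTV_eq : signedBernoulliTV β n = ∑ x ∈ bS β n, |bc β n x| := by
  rw [signedBernoulliTV, signedBernoulli_eq, diracComb_tv]


theorem mixed_sign {ι : Type*} [DecidableEq ι] (t : Finset ι) (w : ι → ℝ)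
    (hw : ∀ i ∈ t, w i = 1 ∨ w i = -1) :
    |∑ i ∈ t, w i| < t.card ↔ (∃ a ∈ t, w a = 1) ∧ ∃ b ∈ t, w b = -1 := by
  classical
  set p := (t.filter (fun i => w i = 1)).card with hp
  set q := (t.filter (fun i => ¬ w i = 1)).card with hq
  have hsum : ∑ i ∈ t, w i = (p : ℝ) - q := by
    rw [← Finset.sum_filter_add_sum_filter_not t (fun i => w i = 1)]
    rw [Finset.sum_congr rfl (fun i hi => (Finset.mem_filter.1 hi).2 : ∀ i ∈ t.filter (fun i => w i = 1), w i = 1)]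
    rw [Finset.sum_congr rfl (fun i hi =>
      ((hw i (Finset.mem_filter.1 hi).1).resolve_left (Finset.mem_filter.1 hi).2 :
        w i = -1))]
    simp [hp, hq, sub_eq_add_neg]
  have hcard : p + q = t.card := Finset.card_filter_add_card_filter_not _
  have h1 : ((∃ a ∈ t, w a = 1) ↔ 0 < p) := by
    rw [hp, Finset.card_pos, Finset.filter_nonempty_iff]
  have h2 : ((∃ b ∈ t, w b = -1) ↔ 0 < q) := by
    rw [hq, Finset.card_pos, Finset.filter_nonempty_iff]
    constructor
    · rintro ⟨b, hb, hb'⟩; exact ⟨b, hb, by rw [hb']; norm_num⟩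
    · rintro ⟨b, hb, hb'⟩; exact ⟨b, hb, (hw b hb).resolve_left hb'⟩
  rw [hsum, h1, h2, ← hcard]
  rw [abs_sub_lt_iff]
  push_cast
  constructor
  · rintro ⟨ha, hb⟩
    constructor
    · by_contra h
      have : p = 0 := by omega
      rw [this] at hb; push_cast at hb; linarith
    · by_contra h
      have : q = 0 := by omega
      rw [this] at ha; push_cast at ha; linarith
  · rintro ⟨ha, hb⟩
    have ha' : (1:ℝ) ≤ p := by exact_mod_cast ha
    have hb' : (1:ℝ) ≤ q := by exact_mod_cast hb
    constructor <;> linarith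

theorem bwgt_pm (ε : Fin n → Bool) : bwgt n ε = 1 ∨ bwgt n ε = -1 := by
  rw [bwgt]
  refine Finset.prod_induction _ (fun x => x = 1 ∨ x = -1) ?_ (Or.inl rfl) ?_
  · rintro a b (ha | ha) (hb | hb) <;> rw [ha, hb] <;> norm_num
  · intro j _
    by_cases h : ε j <;> simp [h]

theorem key : signedBernoulliTV β n < 1 ↔
    ∃ ε ε' : Fin n → Bool, bval β n ε = bval β n ε' ∧ bwgt n ε = 1 ∧ bwgt n ε' = -1 := by
  classical
  rw [signedBernoulliTV_eq]
  set fib : ℝ → Finset (Fin n → Bool) :=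
    fun x => Finset.univ.filter (fun ε => bval β n ε = x) with hfib
  set h : ℝ → ℝ := fun x => (2 ^ n : ℝ)⁻¹ * ((fib x).card : ℝ) with hh
  have h2n : (0:ℝ) < (2 ^ n : ℝ)⁻¹ := by positivity
  have hone : ∑ x ∈ bS β n, h x = 1 := by
    rw [← Finset.mul_sum]
    have : ∑ x ∈ bS β n, ((fib x).card : ℝ) = (2 ^ n : ℝ) := by
      have := Finset.sum_fiberwise_of_maps_to (t := bS β n) (g := bval β n)
        (fun ε (_ : ε ∈ (Finset.univ : Finset (Fin n → Bool))) =>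
          Finset.mem_image_of_mem _ (Finset.mem_univ ε)) (fun _ => (1:ℝ))
      simp only [Finset.sum_const, nsmul_eq_mul, mul_one] at this
      rw [this]
      simp [Fintype.card_fun]
    rw [this, inv_mul_cancel₀ (by positivity)]
  have hle : ∀ x ∈ bS β n, |bc β n x| ≤ h x := by
    intro x _
    rw [bc, abs_mul, abs_of_pos h2n]
    refine mul_le_mul_of_nonneg_left ?_ (le_of_lt h2n)
    calc |∑ ε ∈ fib x, bwgt n ε| ≤ ∑ ε ∈ fib x, |bwgt n ε| := Finset.abs_sum_le_sum_abs _ _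
      _ = (fib x).card := by
          rw [Finset.sum_congr rfl fun ε _ => ?_, Finset.sum_const, nsmul_eq_mul, mul_one]
          rcases bwgt_pm n ε with h | h <;> rw [h] <;> norm_num
  have step1 : ∑ x ∈ bS β n, |bc β n x| < 1 ↔ ∃ x ∈ bS β n, |bc β n x| < h x := by
    constructor
    · intro hlt
      by_contra hc
      push_neg at hc
      have : ∑ x ∈ bS β n, h x ≤ ∑ x ∈ bS β n, |bc β n x| :=
        Finset.sum_le_sum fun x hx => hc x hx
      rw [hone] at this; linarith
    · rintro ⟨x, hx, hxlt⟩
      calc ∑ y ∈ bS β n, |bc β n y| < ∑ y ∈ bS β n, h y :=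
            Finset.sum_lt_sum hle ⟨x, hx, hxlt⟩
        _ = 1 := hone
  rw [step1]
  constructor
  · rintro ⟨x, hx, hxlt⟩
    rw [bc, hh, abs_mul, abs_of_pos h2n, mul_lt_mul_iff_right₀ h2n] at hxlt
    obtain ⟨⟨a, ha, ha1⟩, b, hb, hb1⟩ :=
      (mixed_sign (fib x) (bwgt n) (fun ε _ => bwgt_pm n ε)).1 hxlt
    exact ⟨a, b, by
      rw [(Finset.mem_filter.1 ha).2, (Finset.mem_filter.1 hb).2], ha1, hb1⟩
  · rintro ⟨ε, ε', hval, hw1, hw2⟩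
    refine ⟨bval β n ε, Finset.mem_image_of_mem _ (Finset.mem_univ ε), ?_⟩
    rw [bc, hh, abs_mul, abs_of_pos h2n, mul_lt_mul_iff_right₀ h2n]
    exact (mixed_sign (fib (bval β n ε)) (bwgt n) (fun ε _ => bwgt_pm n ε)).2
      ⟨⟨ε, Finset.mem_filter.2 ⟨Finset.mem_univ _, rfl⟩, hw1⟩,
       ⟨ε', Finset.mem_filter.2 ⟨Finset.mem_univ _, hval.symm⟩, hw2⟩⟩

theorem zpow_rev_aux (hβ0 : β ≠ 0) (k : Fin n) :
    β ^ (-((k : ℕ) : ℤ) - 1) = β ^ (-(n:ℤ)) * β ^ ((Fin.rev k : ℕ)) := by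
  have hk : ((Fin.rev k : ℕ) : ℤ) = (n : ℤ) - 1 - (k : ℕ) := by
    have := k.is_lt
    simp only [Fin.val_rev]
    omega
  rw [← zpow_natCast β (Fin.rev k : ℕ), ← zpow_add₀ hβ0, hk]
  ring_nf

theorem bval_sub (hβ0 : β ≠ 0) (ε ε' : Fin n → Bool) (η : Fin n → ℤ)
    (h : ∀ k, (if ε k then (1:ℝ) else -1) - (if ε' k then (1:ℝ) else -1)
      = 2 * (η (Fin.rev k) : ℝ)) :
    bval β n ε - bval β n ε' = 2 * β ^ (-(n:ℤ)) * ∑ j, (η j : ℝ) * β ^ ((j : ℕ)) := by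
  rw [bval, bval, ← Finset.sum_sub_distrib, Finset.mul_sum]
  refine Fintype.sum_equiv Fin.revPerm _ _ fun k => ?_
  rw [← sub_mul, h k, zpow_rev_aux β n hβ0 k]
  show (2:ℝ) * (η (Fin.rev k) : ℝ) * (β ^ (-(n:ℤ)) * β ^ ((Fin.rev k : ℕ)))
    = 2 * β ^ (-(n:ℤ)) * ((η (Fin.rev k) : ℝ) * β ^ (((Fin.rev k) : ℕ)))
  ring

theorem bwgt_mul (ε ε' : Fin n → Bool) :
    bwgt n ε * bwgt n ε'
      = (-1 : ℝ) ^ (Finset.univ.filter (fun j => ε j ≠ ε' j)).card := by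
  classical
  rw [bwgt, bwgt, ← Finset.prod_mul_distrib]
  have : ∀ j : Fin n, (if ε j then (1:ℝ) else -1) * (if ε' j then (1:ℝ) else -1)
      = (-1 : ℝ) ^ (if ε j ≠ ε' j then 1 else 0) := by
    intro j
    cases hf : ε j <;> cases hg : ε' j <;> simp
  rw [Finset.prod_congr rfl fun j _ => this j, Finset.prod_pow_eq_pow_sum]
  congr 1
  rw [← Finset.sum_filter, Finset.sum_const, smul_eq_mul, mul_one]

theorem card_rev (P : Fin n → Prop) [DecidablePred P] :
    (Finset.univ.filter (fun j => P (Fin.rev j))).card = (Finset.univ.filter P).card := by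
  have : Finset.univ.filter (fun j => P (Fin.rev j))
      = (Finset.univ.filter P).image Fin.rev := by
    ext j
    simp only [Finset.mem_filter, Finset.mem_univ, true_and, Finset.mem_image]
    constructor
    · intro h; exact ⟨Fin.rev j, h, Fin.rev_rev j⟩
    · rintro ⟨k, hk, rfl⟩; rwa [Fin.rev_rev]
  rw [this, Finset.card_image_of_injective _ Fin.rev_injective]

theorem odd_sum_iff (η : Fin n → ℤ) (hr : ∀ j, η j = 0 ∨ η j = 1 ∨ η j = -1) :
    Odd (∑ j, η j) ↔ Odd (Finset.univ.filter (fun j => η j ≠ 0)).card := by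
  classical
  rw [Int.odd_iff, Nat.odd_iff]
  have h1 : (∑ j : Fin n, η j % 2) % 2 = (∑ j, η j) % 2 := (Finset.sum_int_mod Finset.univ 2 η).symm
  have h2 : ∀ j, η j % 2 = if η j ≠ 0 then 1 else 0 := by
    intro j
    rcases hr j with h | h | h <;> rw [h] <;> norm_num
  rw [← h1, Finset.sum_congr rfl fun j _ => h2 j, ← Finset.sum_filter, Finset.sum_const,
    nsmul_eq_mul, mul_one]
  omega

theorem neg_one_pow_eq_neg_one_iff (d : ℕ) : ((-1 : ℝ)) ^ d = -1 ↔ Odd d := by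
  constructor
  · intro h
    rcases Nat.even_or_odd d with he | ho
    · rw [he.neg_one_pow] at h; norm_num at h
    · exact ho
  · exact fun h => h.neg_one_pow

theorem exists_pair_iff (hβ0 : β ≠ 0) :
    (∃ ε ε' : Fin n → Bool, bval β n ε = bval β n ε' ∧ bwgt n ε = 1 ∧ bwgt n ε' = -1) ↔
      ∃ η : Fin n → ℤ, (∀ j, η j = 0 ∨ η j = 1 ∨ η j = -1) ∧
        Odd (∑ j, η j) ∧ (∑ j, (η j : ℝ) * β ^ (j : ℕ)) = 0 := by
  classical
  have hc : (2:ℝ) * β ^ (-(n:ℤ)) ≠ 0 := mul_ne_zero two_ne_zero (zpow_ne_zero _ hβ0)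
  constructor
  · rintro ⟨ε, ε', hval, hw1, hw2⟩
    refine ⟨fun j => (if ε (Fin.rev j) then 1 else 0) - (if ε' (Fin.rev j) then 1 else 0),
      ?_, ?_, ?_⟩
    · intro j
      by_cases h1 : ε (Fin.rev j) <;> by_cases h2 : ε' (Fin.rev j) <;> simp [h1, h2]
    · rw [odd_sum_iff n _ (fun j => by
        by_cases h1 : ε (Fin.rev j) <;> by_cases h2 : ε' (Fin.rev j) <;> simp [h1, h2])]
      have hiff : ∀ j, ((if ε (Fin.rev j) then (1:ℤ) else 0)
          - (if ε' (Fin.rev j) then 1 else 0) ≠ 0) ↔ ε (Fin.rev j) ≠ ε' (Fin.rev j) := by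
        intro j
        by_cases h1 : ε (Fin.rev j) <;> by_cases h2 : ε' (Fin.rev j) <;> simp [h1, h2]
      rw [Finset.filter_congr fun j _ => hiff j, card_rev n (fun k => ε k ≠ ε' k)]
      rw [← neg_one_pow_eq_neg_one_iff, ← bwgt_mul, hw1, hw2]
      norm_num
    · have hcond : ∀ k, (if ε k then (1:ℝ) else -1) - (if ε' k then (1:ℝ) else -1)
          = 2 * (((if ε (Fin.rev (Fin.rev k)) then (1:ℤ) else 0)
            - (if ε' (Fin.rev (Fin.rev k)) then 1 else 0) : ℤ) : ℝ) := by
        intro k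
        rw [Fin.rev_rev]
        by_cases h1 : ε k <;> by_cases h2 : ε' k <;> simp [h1, h2] <;> norm_num
      have := bval_sub β n hβ0 ε ε'
        (fun j => (if ε (Fin.rev j) then (1:ℤ) else 0) - (if ε' (Fin.rev j) then 1 else 0)) hcond
      rw [hval, sub_self] at this
      exact ((mul_eq_zero.1 this.symm).resolve_left hc)
  · rintro ⟨η, hr, hodd, hsum⟩
    set ε : Fin n → Bool := fun j => decide (η (Fin.rev j) ≠ -1) with hε
    set ε' : Fin n → Bool := fun j => decide (η (Fin.rev j) ≠ 1) with hε'
    have hcond : ∀ k, (if ε k then (1:ℝ) else -1) - (if ε' k then (1:ℝ) else -1)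
        = 2 * ((η (Fin.rev k) : ℤ) : ℝ) := by
      intro k
      rcases hr (Fin.rev k) with h | h | h <;> simp [hε, hε', h] <;> norm_num
    have hval : bval β n ε = bval β n ε' := by
      have := bval_sub β n hβ0 ε ε' η hcond
      rw [hsum, mul_zero] at this
      linarith [this]
    have hd : Odd (Finset.univ.filter (fun j => ε j ≠ ε' j)).card := by
      have hiff : ∀ j, (ε j ≠ ε' j) ↔ ((fun k => η k ≠ 0) (Fin.rev j)) := by
        intro j
        rcases hr (Fin.rev j) with h | h | h <;> simp [hε, hε', h]
      rw [Finset.filter_congr fun j _ => hiff j, card_rev n (fun k => η k ≠ 0)]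
      exact (odd_sum_iff n η hr).1 hodd
    have hprod : bwgt n ε * bwgt n ε' = -1 := by
      rw [bwgt_mul]
      exact (neg_one_pow_eq_neg_one_iff _).2 hd
    have pm : ∀ δ : Fin n → Bool, bwgt n δ = 1 ∨ bwgt n δ = -1 := by
      intro δ
      rw [bwgt]
      refine Finset.prod_induction _ (fun x => x = 1 ∨ x = -1) ?_ (Or.inl rfl) ?_
      · rintro a b (ha | ha) (hb | hb) <;> rw [ha, hb] <;> norm_num
      · intro j _
        by_cases h : δ j <;> simp [h]
    rcases pm ε with h1 | h1 <;> rcases pm ε' with h2 | h2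
    · rw [h1, h2] at hprod; norm_num at hprod
    · exact ⟨ε, ε', hval, h1, h2⟩
    · exact ⟨ε', ε, hval.symm, h2, h1⟩
    · rw [h1, h2] at hprod; norm_num at hprod

end Aux

theorem stmt_14 (β : ℝ) (hβ : 1 < β) (n : ℕ) (hn : 1 ≤ n) :
    signedBernoulliTV β n < 1 ↔
      ∃ η : Fin n → ℤ, (∀ j, η j = 0 ∨ η j = 1 ∨ η j = -1) ∧
        Odd (∑ j, η j) ∧ (∑ j, (η j : ℝ) * β ^ (j : ℕ)) = 0 := by
  rw [key β n, exists_pair_iff β n (ne_of_gt (lt_trans zero_lt_one hβ))]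
end

section
/- Suppose β > 1 satisfies β^m = β^{m-1} + ⋯ + β + 1 for an odd integer m ≥ 3, and x^m − x^{m-1} − ⋯ − x − 1 is irreducible over ℚ. Then for every n ≥ 1, whenever ε, ε' ∈ {±1}^n satisfy Σ_{j=1}^n ε_j β^{−j} = Σ_{j=1}^n ε'_j β^{−j}, one has ε_1⋯ε_n = ε'_1⋯ε'_n. Consequently ‖ν_β^{(n)}‖ = 1 for all n. -/
open MeasureTheory
open scoped ENNReal NNReal

section Aux

open Polynomial


lemma prod_eq_of_sum_eq (m : ℕ) (hm : 3 ≤ m) (hmo : Odd m) (β : ℝ) (hβ1 : 1 < β)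
    (hβ : β ^ m = ∑ j ∈ Finset.range m, β ^ j)
    (hirr : Irreducible ((Polynomial.X ^ m - ∑ j ∈ Finset.range m, Polynomial.X ^ j :
      Polynomial ℚ)))
    (n : ℕ) (ε ε' : Fin n → ℝ)
    (hε : ∀ j, ε j = 1 ∨ ε j = -1) (hε' : ∀ j, ε' j = 1 ∨ ε' j = -1)
    (hsum : (∑ j, ε j * β ^ (-((j : ℕ) : ℤ) - 1)) = ∑ j, ε' j * β ^ (-((j : ℕ) : ℤ) - 1)) :
    ∏ j, ε j = ∏ j, ε' j := by
  have hβ0 : (0:ℝ) < β := lt_trans one_pos hβ1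
  have hβne : β ≠ 0 := ne_of_gt hβ0
  -- the coefficient sequence
  set a : Fin n → ℤ := fun j => if ε j = ε' j then 0 else (if ε j = 1 then 1 else -1) with ha
  have ha2 : ∀ j, ((a j : ℝ)) * 2 = ε j - ε' j := by
    intro j
    rcases hε j with h1 | h1 <;> rcases hε' j with h2 | h2 <;>
      simp [ha, h1, h2] <;> norm_num
  -- the polynomial over ℤ
  set q : ℤ[X] := ∑ j : Fin n, C (a j) * X ^ (n - 1 - (j:ℕ)) with hq
  have haeval : Polynomial.aeval β q = 0 := by
    have h0 : ∑ j : Fin n, ((a j : ℝ)) * β ^ (-((j : ℕ) : ℤ) - 1) = 0 := by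
      have : ∑ j : Fin n, (ε j - ε' j) * β ^ (-((j : ℕ) : ℤ) - 1) = 0 := by
        simp [sub_mul, Finset.sum_sub_distrib, hsum]
      have h2 : ∑ j : Fin n, ((a j : ℝ)) * β ^ (-((j : ℕ) : ℤ) - 1) * 2 = 0 := by
        rw [← this]; congr 1; ext j; rw [mul_right_comm, ha2]
      rw [← Finset.sum_mul] at h2
      linarith
    have hmul : (β ^ (n:ℤ)) * ∑ j : Fin n, ((a j : ℝ)) * β ^ (-((j : ℕ) : ℤ) - 1) = 0 := by
      rw [h0, mul_zero]
    rw [Finset.mul_sum] at hmul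
    have key : ∀ j : Fin n, (β ^ (n:ℤ)) * (((a j : ℝ)) * β ^ (-((j : ℕ) : ℤ) - 1))
        = ((a j : ℝ)) * β ^ (n - 1 - (j:ℕ)) := by
      intro j
      have hj : (j:ℕ) < n := j.2
      rw [mul_left_comm, ← zpow_natCast β (n - 1 - (j:ℕ)), ← zpow_add₀ hβne]
      congr 2
      omega
    rw [Finset.sum_congr rfl (fun j _ => key j)] at hmul
    rw [hq]
    simp only [map_sum, map_mul, map_pow, aeval_C, aeval_X, map_intCast, algebraMap_int_eq, eq_intCast]
    exact hmul
  -- the minimal polynomial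
  set p : ℚ[X] := X ^ m - ∑ j ∈ Finset.range m, X ^ j with hp
  set pZ : ℤ[X] := X ^ m - ∑ j ∈ Finset.range m, X ^ j with hpZ
  have hdegsum : ∀ (R : Type) [inst : CommRing R] [Nontrivial R],
      ((∑ j ∈ Finset.range m, (X:R[X]) ^ j)).degree < (m : ℕ) := by
    intro R _ _
    apply lt_of_le_of_lt (Polynomial.degree_sum_le _ _)
    rw [Finset.sup_lt_iff (by exact WithBot.bot_lt_coe m)]
    intro j hj
    rw [Polynomial.degree_X_pow]
    exact_mod_cast Finset.mem_range.1 hj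
  have hpZmonic : pZ.Monic := Polynomial.monic_X_pow_sub (hdegsum ℤ)
  have hpmonic : p.Monic := Polynomial.monic_X_pow_sub (hdegsum ℚ)
  have hpmap : pZ.map (Int.castRingHom ℚ) = p := by
    simp [hpZ, hp, Polynomial.map_sub, Polynomial.map_pow, Polynomial.map_sum]
  have hproot : Polynomial.aeval β p = 0 := by
    rw [hp]
    simp only [map_sub, map_sum, map_pow, aeval_X]
    rw [hβ]; ring
  have hpmin : minpoly ℚ β = p := (minpoly.eq_of_irreducible_of_monic hirr hproot hpmonic).symm
  -- divisibility
  have hdvdQ : p ∣ q.map (Int.castRingHom ℚ) := by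
    rw [← hpmin]
    apply minpoly.dvd
    rw [show (Int.castRingHom ℚ) = algebraMap ℤ ℚ from rfl, Polynomial.aeval_map_algebraMap]
    exact haeval
  have hdvd : pZ ∣ q := by
    rw [← Polynomial.map_dvd_map (Int.castRingHom ℚ) Int.cast_injective hpZmonic, hpmap]
    exact hdvdQ
  -- evaluate at 1
  obtain ⟨r, hr⟩ := hdvd
  have heval1 : q.eval 1 = pZ.eval 1 * r.eval 1 := by rw [hr, Polynomial.eval_mul]
  have hqeval1 : q.eval 1 = ∑ j : Fin n, a j := by
    simp [hq, Polynomial.eval_finset_sum]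
  have hpZeval1 : pZ.eval 1 = 1 - m := by
    simp [hpZ]
  have heven : Even (∑ j : Fin n, a j) := by
    rw [← hqeval1, heval1, hpZeval1]
    obtain ⟨k, hk⟩ := hmo
    have : (1 : ℤ) - m = -(2 * k) := by push_cast [hk]; ring
    rw [this]
    exact ⟨-(k * r.eval 1), by ring⟩
  -- parity of the number of differing coordinates
  set D : Finset (Fin n) := Finset.univ.filter (fun j => ¬ (ε j = ε' j)) with hD
  have hsumD : ∑ j : Fin n, a j = ∑ j ∈ D, a j := by
    symm
    apply Finset.sum_subset (Finset.subset_univ D)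
    intro j _ hj
    simp only [hD, Finset.mem_filter, Finset.mem_univ, true_and, not_not] at hj
    simp [ha, hj]
  have hcard : Even (D.card) := by
    have h1 : ∀ j ∈ D, (2:ℤ) ∣ (a j - 1) := by
      intro j hj
      simp only [hD, Finset.mem_filter, Finset.mem_univ, true_and] at hj
      simp only [ha, if_neg hj]
      by_cases h : ε j = 1 <;> simp [h]
    have h2 : (2:ℤ) ∣ (∑ j ∈ D, a j) - D.card := by
      have : (∑ j ∈ D, a j) - D.card = ∑ j ∈ D, (a j - 1) := by
        rw [Finset.sum_sub_distrib]
        simp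
      rw [this]
      exact Finset.dvd_sum h1
    have h3 : (2:ℤ) ∣ (D.card : ℤ) := by
      have h4 : (2:ℤ) ∣ ∑ j ∈ D, a j := by
        rw [← hsumD]; exact heven.two_dvd
      omega
    have h4 : 2 ∣ D.card := by exact_mod_cast h3
    rw [Nat.even_iff]
    omega
  -- conclude
  have hprodmul : (∏ j, ε j) * (∏ j, ε' j) = 1 := by
    rw [← Finset.prod_mul_distrib]
    have : ∀ j : Fin n, ε j * ε' j = if ε j = ε' j then 1 else -1 := by
      intro j
      rcases hε j with h1 | h1 <;> rcases hε' j with h2 | h2 <;> simp [h1, h2] <;> norm_num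
    rw [Finset.prod_congr rfl (fun j _ => this j)]
    rw [Finset.prod_ite, Finset.prod_const, Finset.prod_const, one_pow, one_mul]
    rw [show (Finset.univ.filter fun j => ¬ ε j = ε' j) = D from rfl]
    exact hcard.neg_one_pow
  have hsq : (∏ j, ε' j) * (∏ j, ε' j) = 1 := by
    rw [← Finset.prod_mul_distrib]
    apply Finset.prod_eq_one
    intro j _
    rcases hε' j with h | h <;> simp [h]
  calc ∏ j, ε j = (∏ j, ε j) * ((∏ j, ε' j) * (∏ j, ε' j)) := by rw [hsq, mul_one]
    _ = ((∏ j, ε j) * (∏ j, ε' j)) * (∏ j, ε' j) := by ring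
    _ = ∏ j, ε' j := by rw [hprodmul, one_mul]


end Aux

lemma vm_sum_apply {α : Type*} [MeasurableSpace α] {ι : Type*} (s : Finset ι)
    (v : ι → VectorMeasure α ℝ) (A : Set α) :
    (∑ i ∈ s, v i) A = ∑ i ∈ s, v i A := by
  rw [show ((∑ i ∈ s, v i : VectorMeasure α ℝ) : Set α → ℝ)
      = ∑ i ∈ s, (v i : Set α → ℝ) from map_sum (FunLike.coeAddMonoidHom (VectorMeasure α ℝ) (Set α) ℝ) v s,
    Finset.sum_apply]

lemma tv_eq_one (β : ℝ) (n : ℕ)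
    (h1 : ∀ ε ε' : Fin n → ℝ,
      (∀ j, ε j = 1 ∨ ε j = -1) → (∀ j, ε' j = 1 ∨ ε' j = -1) →
      (∑ j, ε j * β ^ (-((j : ℕ) : ℤ) - 1)) = ∑ j, ε' j * β ^ (-((j : ℕ) : ℤ) - 1) →
      ∏ j, ε j = ∏ j, ε' j) :
    signedBernoulliTV β n = 1 := by
  classical
  set f : (Fin n → Bool) → Fin n → ℝ := fun ε j => if ε j then (1:ℝ) else -1 with hf
  set c : (Fin n → Bool) → ℝ := fun ε => ∏ j, f ε j with hcdef
  set x : (Fin n → Bool) → ℝ := fun ε => ∑ j : Fin n, f ε j * β ^ (-((j : ℕ) : ℤ) - 1) with hxdef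
  have hfval : ∀ ε j, f ε j = 1 ∨ f ε j = -1 := by
    intro ε j; by_cases h : ε j <;> simp [hf, h]
  have hc : ∀ ε, c ε = 1 ∨ c ε = -1 := by
    intro ε
    refine Finset.prod_induction (f ε) (fun y => y = 1 ∨ y = -1) ?_ (Or.inl rfl) ?_
    · rintro u v (hu | hu) (hv | hv) <;> simp [hu, hv]
    · intro j _; exact hfval ε j
  -- key: equal atoms have equal signs
  have hkey : ∀ ε ε', x ε = x ε' → c ε = c ε' := by
    intro ε ε' hx
    exact h1 (f ε) (f ε') (hfval ε) (hfval ε') hx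
  set P : Finset (Fin n → Bool) := Finset.univ.filter (fun ε => c ε = 1) with hP
  set N : Finset (Fin n → Bool) := Finset.univ.filter (fun ε => ¬ c ε = 1) with hN
  set e : ℝ≥0∞ := ((2:ℝ≥0∞) ^ n)⁻¹ with he
  have hene : e ≠ ⊤ := by
    simp [he]
  set μ : Measure ℝ := e • ∑ ε ∈ P, Measure.dirac (x ε) with hμ
  set ν : Measure ℝ := e • ∑ ε ∈ N, Measure.dirac (x ε) with hν
  have hμap : ∀ A : Set ℝ, μ A = e * ∑ ε ∈ P, Measure.dirac (x ε) A := by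
    intro A; rw [hμ, Measure.smul_apply, Measure.finset_sum_apply, smul_eq_mul]
  have hνap : ∀ A : Set ℝ, ν A = e * ∑ ε ∈ N, Measure.dirac (x ε) A := by
    intro A; rw [hν, Measure.smul_apply, Measure.finset_sum_apply, smul_eq_mul]
  have hdiracne : ∀ (y : ℝ) (A : Set ℝ), Measure.dirac y A ≠ ⊤ :=
    fun y A => measure_ne_top _ _
  haveI hμfin : IsFiniteMeasure μ := by
    constructor
    rw [hμap]
    exact ENNReal.mul_lt_top hene.lt_top
      (lt_of_le_of_lt (Finset.sum_le_card_nsmul _ _ 1 (fun ε _ => prob_le_one)) (by simp))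
  haveI hνfin : IsFiniteMeasure ν := by
    constructor
    rw [hνap]
    exact ENNReal.mul_lt_top hene.lt_top
      (lt_of_le_of_lt (Finset.sum_le_card_nsmul _ _ 1 (fun ε _ => prob_le_one)) (by simp))
  -- mutual singularity
  set S : Set ℝ := ↑(N.image x) with hS
  have hSmeas : MeasurableSet S := (N.image x).finite_toSet.measurableSet
  have hxP_not_S : ∀ ε ∈ P, x ε ∉ S := by
    intro ε hε hmem
    rw [hS, Finset.mem_coe, Finset.mem_image] at hmem
    obtain ⟨ε', hε', hxe⟩ := hmem
    have h₁ : c ε = 1 := (Finset.mem_filter.1 hε).2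
    have h₂ : ¬ c ε' = 1 := (Finset.mem_filter.1 hε').2
    have := hkey ε ε' hxe.symm
    rw [h₁] at this
    exact h₂ this.symm
  have hsing : μ ⟂ₘ ν := by
    refine ⟨S, hSmeas, ?_, ?_⟩
    · rw [hμap]
      have : ∀ ε ∈ P, Measure.dirac (x ε) S = 0 := by
        intro ε hε
        rw [Measure.dirac_apply' _ hSmeas, Set.indicator_of_notMem (hxP_not_S ε hε)]
      rw [Finset.sum_eq_zero this, mul_zero]
    · rw [hνap]
      have : ∀ ε ∈ N, Measure.dirac (x ε) Sᶜ = 0 := by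
        intro ε hε
        rw [Measure.dirac_apply' _ hSmeas.compl]
        apply Set.indicator_of_notMem
        simp only [Set.notMem_compl_iff]
        exact Finset.mem_coe.2 (Finset.mem_image_of_mem x hε)
      rw [Finset.sum_eq_zero this, mul_zero]
  set J : JordanDecomposition ℝ := @JordanDecomposition.mk ℝ _ μ ν hμfin hνfin hsing with hJ
  -- values of dirac measures
  have hdirtoReal : ∀ (y : ℝ) (A : Set ℝ), MeasurableSet A →
      (Measure.dirac y A).toReal = (if y ∈ A then (1:ℝ) else 0) := by
    intro y A hA
    rw [Measure.dirac_apply' _ hA]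
    by_cases h : y ∈ A <;> simp [h]
  have hetoReal : e.toReal = ((2:ℝ) ^ n)⁻¹ := by
    rw [he, ENNReal.toReal_inv, ENNReal.toReal_pow]
    norm_num
  -- the equality of signed measures
  have hEq : signedBernoulli β n = J.toSignedMeasure := by
    apply VectorMeasure.ext
    intro A hA
    have hLHS : signedBernoulli β n A
        = ((2:ℝ) ^ n)⁻¹ * ∑ ε : Fin n → Bool, c ε * (if x ε ∈ A then (1:ℝ) else 0) := by
      rw [signedBernoulli, VectorMeasure.smul_apply, vm_sum_apply, smul_eq_mul]
      congr 1
      apply Finset.sum_congr rfl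
      intro ε _
      rw [VectorMeasure.smul_apply, smul_eq_mul,
        Measure.toSignedMeasure_apply_measurable hA, measureReal_def, hdirtoReal _ _ hA]
    have hμA : (μ A).toReal = ((2:ℝ) ^ n)⁻¹ * ∑ ε ∈ P, (if x ε ∈ A then (1:ℝ) else 0) := by
      rw [hμap, ENNReal.toReal_mul, hetoReal,
        ENNReal.toReal_sum (fun ε _ => hdiracne _ _)]
      congr 1
      exact Finset.sum_congr rfl (fun ε _ => hdirtoReal _ _ hA)
    have hνA : (ν A).toReal = ((2:ℝ) ^ n)⁻¹ * ∑ ε ∈ N, (if x ε ∈ A then (1:ℝ) else 0) := by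
      rw [hνap, ENNReal.toReal_mul, hetoReal,
        ENNReal.toReal_sum (fun ε _ => hdiracne _ _)]
      congr 1
      exact Finset.sum_congr rfl (fun ε _ => hdirtoReal _ _ hA)
    rw [hLHS, JordanDecomposition.toSignedMeasure, VectorMeasure.sub_apply,
      Measure.toSignedMeasure_apply_measurable hA,
      Measure.toSignedMeasure_apply_measurable hA, measureReal_def, measureReal_def, hμA, hνA, ← mul_sub]
    congr 1
    rw [← Finset.sum_filter_add_sum_filter_not Finset.univ (fun ε => c ε = 1)
      (fun ε => c ε * (if x ε ∈ A then (1:ℝ) else 0))]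
    rw [← hP, ← hN]
    have hPpart : ∑ ε ∈ P, c ε * (if x ε ∈ A then (1:ℝ) else 0)
        = ∑ ε ∈ P, (if x ε ∈ A then (1:ℝ) else 0) := by
      apply Finset.sum_congr rfl
      intro ε hε
      rw [(Finset.mem_filter.1 hε).2, one_mul]
    have hNpart : ∑ ε ∈ N, c ε * (if x ε ∈ A then (1:ℝ) else 0)
        = -∑ ε ∈ N, (if x ε ∈ A then (1:ℝ) else 0) := by
      rw [← Finset.sum_neg_distrib]
      apply Finset.sum_congr rfl
      intro ε hε
      have := (Finset.mem_filter.1 hε).2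
      rcases hc ε with h | h
      · exact absurd h this
      · rw [h]; ring
    rw [hPpart, hNpart]
    ring
  -- compute the total variation
  have hjd : (signedBernoulli β n).toJordanDecomposition = J :=
    SignedMeasure.toJordanDecomposition_eq hEq
  rw [signedBernoulliTV, SignedMeasure.totalVariation, hjd]
  show ((μ + ν) Set.univ).toReal = 1
  rw [Measure.add_apply, ENNReal.toReal_add, hμap, hνap]
  · have hduniv : ∀ ε : Fin n → Bool, Measure.dirac (x ε) Set.univ = 1 := by
      intro ε; simp
    rw [Finset.sum_congr rfl (fun ε _ => hduniv ε), Finset.sum_congr rfl (fun ε _ => hduniv ε)]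
    rw [Finset.sum_const, Finset.sum_const]
    rw [ENNReal.toReal_mul, ENNReal.toReal_mul, hetoReal]
    simp only [nsmul_eq_mul, mul_one, ENNReal.toReal_mul]
    have hcard : P.card + N.card = 2 ^ n := by
      rw [hP, hN, Finset.card_filter_add_card_filter_not]
      simp [Finset.card_univ]
    have : ((P.card : ℝ≥0∞)).toReal = (P.card : ℝ) := by simp
    rw [this, show ((N.card : ℝ≥0∞)).toReal = (N.card : ℝ) by simp]
    rw [← mul_add]
    rw [show (P.card : ℝ) + (N.card : ℝ) = ((2:ℝ))^n by exact_mod_cast congrArg (Nat.cast : ℕ → ℝ) hcard]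
    field_simp
  · exact measure_ne_top _ _
  · exact measure_ne_top _ _


theorem stmt_15 (m : ℕ) (hm : 3 ≤ m) (hmo : Odd m) (β : ℝ) (hβ1 : 1 < β)
    (hβ : β ^ m = ∑ j ∈ Finset.range m, β ^ j)
    (hirr : Irreducible ((Polynomial.X ^ m - ∑ j ∈ Finset.range m, Polynomial.X ^ j :
      Polynomial ℚ))) :
    (∀ n : ℕ, 1 ≤ n → ∀ ε ε' : Fin n → ℝ,
      (∀ j, ε j = 1 ∨ ε j = -1) → (∀ j, ε' j = 1 ∨ ε' j = -1) →
      (∑ j, ε j * β ^ (-((j : ℕ) : ℤ) - 1)) = ∑ j, ε' j * β ^ (-((j : ℕ) : ℤ) - 1) →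
      ∏ j, ε j = ∏ j, ε' j) ∧
    (∀ n : ℕ, 1 ≤ n → signedBernoulliTV β n = 1) := by
  constructor
  · intro n _ ε ε' hε hε' hsum
    exact prod_eq_of_sum_eq m hm hmo β hβ1 hβ hirr n ε ε' hε hε' hsum
  · intro n _
    exact tv_eq_one β n (fun ε ε' hε hε' hsum =>
      prod_eq_of_sum_eq m hm hmo β hβ1 hβ hirr n ε ε' hε hε' hsum)
end
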